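/- Every nondegenerate sinusoidal function is a Tauber–Wiener function: if g(x) = A sin(ωx + φ) with A ≠ 0 and ω ≠ 0, then for every real interval [a,b] with a < b, every continuous function f : [a,b] → ℝ, and every ε > 0, there exist a positive integer N and real constants c_i, λ_i, θ_i (i = 1,…,N) such that |f(x) − Σ_{i=1}^N c_i g(λ_i x + θ_i)| < ε for all x ∈ [a,b]. -/

import Mathlib

open scoped BigOperators

/-- Every nondegenerate sinusoidal function `g x = A sin (ω x + φ)` (with `A ≠ 0`,
`ω ≠ 0`) is a Tauber–Wiener function. -/
theorem sinusoidal_is_tauber_wiener (A ω φ : ℝ) (hA : A ≠ 0) (hω : ω ≠ 0)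
    (g : ℝ → ℝ) (hg : ∀ x, g x = A * Real.sin (ω * x + φ))
    (a b : ℝ) (hab : a < b) (f : ℝ → ℝ)
    (hf : ContinuousOn f (Set.Icc a b)) (ε : ℝ) (hε : 0 < ε) :
    ∃ N : ℕ, 0 < N ∧ ∃ c lam θ : Fin N → ℝ,
      ∀ x ∈ Set.Icc a b,
        |f x - ∑ i : Fin N, c i * g (lam i * x + θ i)| < ε := by
  set X := Set.Icc a b with hX
  -- the basic sinusoids as continuous maps on X
  let s : ℝ → ℝ → C(X, ℝ) := fun l t =>
    ⟨fun x => Real.sin (l * (x : ℝ) + t), by fun_prop⟩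
  let T : Set C(X, ℝ) := {h | ∃ l t, h = s l t}
  have h1 : (1 : C(X, ℝ)) ∈ Submodule.span ℝ T := by
    apply Submodule.subset_span
    refine ⟨0, Real.pi / 2, ?_⟩
    ext x
    simp [s, Real.sin_pi_div_two]
  have hmulT : ∀ p ∈ T, ∀ q ∈ T, p * q ∈ Submodule.span ℝ T := by
    rintro p ⟨l₁, t₁, rfl⟩ q ⟨l₂, t₂, rfl⟩
    have key : s l₁ t₁ * s l₂ t₂ =
        (1/2 : ℝ) • s (l₁ - l₂) (t₁ - t₂ + Real.pi / 2)
        + (-(1/2) : ℝ) • s (l₁ + l₂) (t₁ + t₂ + Real.pi / 2) := by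
      ext x
      simp only [ContinuousMap.mul_apply, ContinuousMap.add_apply,
        ContinuousMap.smul_apply, smul_eq_mul, s, ContinuousMap.coe_mk]
      have e1 : (l₁ - l₂) * (x : ℝ) + (t₁ - t₂ + Real.pi / 2)
          = ((l₁ * x + t₁) - (l₂ * x + t₂)) + Real.pi / 2 := by ring
      have e2 : (l₁ + l₂) * (x : ℝ) + (t₁ + t₂ + Real.pi / 2)
          = ((l₁ * x + t₁) + (l₂ * x + t₂)) + Real.pi / 2 := by ring
      have prod : ∀ u v : ℝ, Real.sin u * Real.sin v
          = 1/2 * Real.cos (u - v) + -(1/2) * Real.cos (u + v) := by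
        intro u v
        rw [Real.cos_sub, Real.cos_add]
        ring
      rw [e1, e2, Real.sin_add_pi_div_two, Real.sin_add_pi_div_two, prod]
    rw [key]
    exact Submodule.add_mem _
      (Submodule.smul_mem _ _ (Submodule.subset_span ⟨_, _, rfl⟩))
      (Submodule.smul_mem _ _ (Submodule.subset_span ⟨_, _, rfl⟩))
  have hmul : ∀ p q : C(X, ℝ), p ∈ Submodule.span ℝ T → q ∈ Submodule.span ℝ T →
      p * q ∈ Submodule.span ℝ T := by
    intro p q hp hq
    have := Submodule.mul_mem_mul hp hq
    rw [Submodule.span_mul_span] at this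
    refine Submodule.span_le.2 ?_ this
    rintro r ⟨p', hp', q', hq', rfl⟩
    exact hmulT p' hp' q' hq'
  let S : Subalgebra ℝ C(X, ℝ) := (Submodule.span ℝ T).toSubalgebra h1 hmul
  -- S separates points
  have hsep : S.SeparatesPoints := by
    intro x y hxy
    set M : ℝ := max |a| |b| + 1 with hM
    have hM0 : 0 < M := by positivity
    have hbound : ∀ z : X, (z : ℝ) / M ∈ Set.Icc (-(Real.pi / 2)) (Real.pi / 2) := by
      intro z
      have hz : |(z : ℝ)| ≤ max |a| |b| := by
        rcases z with ⟨z, hz1, hz2⟩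
        simp only [abs_le]
        constructor
        · calc -(max |a| |b|) ≤ -|a| := by simp
            _ ≤ a := neg_abs_le a
            _ ≤ z := hz1
        · calc z ≤ b := hz2
            _ ≤ |b| := le_abs_self b
            _ ≤ max |a| |b| := le_max_right _ _
      have h1' : |(z : ℝ) / M| < 1 := by
        rw [abs_div, abs_of_pos hM0, div_lt_one hM0]
        linarith
      have hpi : (1 : ℝ) < Real.pi / 2 := by
        have := Real.pi_gt_three
        linarith
      rw [Set.mem_Icc]
      rw [abs_lt] at h1'
      constructor <;> linarith
    refine ⟨_, ⟨s (1/M) 0, Submodule.subset_span ⟨1/M, 0, rfl⟩, rfl⟩, ?_⟩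
    simp only [s, ContinuousMap.coe_mk, add_zero]
    have hinj := Real.strictMonoOn_sin.injOn
    intro hcontra
    apply hxy
    have : (x : ℝ) / M = (y : ℝ) / M := by
      apply hinj (hbound x) (hbound y)
      convert hcontra using 2 <;> ring
    have hxy' : (x : ℝ) = (y : ℝ) := by
      field_simp at this
      exact this
    exact Subtype.ext hxy'
  -- Stone–Weierstrass
  have hdense := ContinuousMap.subalgebra_topologicalClosure_eq_top_of_separatesPoints S hsep
  let F : C(X, ℝ) := ⟨X.restrict f, hf.restrict⟩
  have hF : F ∈ closure (S : Set C(X, ℝ)) := by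
    have : F ∈ S.topologicalClosure := by rw [hdense]; trivial
    exact this
  rw [Metric.mem_closure_iff] at hF
  obtain ⟨h, hhS, hdist⟩ := hF ε hε
  -- h is a finite linear combination of sinusoids
  have hhspan : h ∈ Submodule.span ℝ T := hhS
  rw [Submodule.mem_span_set'] at hhspan
  obtain ⟨n, coef, vec, hsum⟩ := hhspan
  choose li ti hvec using fun i => (vec i).2
  refine ⟨n + 1, Nat.succ_pos n,
    Fin.snoc (fun i => coef i / A) 0,
    Fin.snoc (fun i => li i / ω) 0,
    Fin.snoc (fun i => (ti i - φ) / ω) 0, ?_⟩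
  intro x hx
  have hval : ∑ i : Fin (n+1),
      (Fin.snoc (fun i => coef i / A) 0 : Fin (n+1) → ℝ) i *
        g ((Fin.snoc (fun i => li i / ω) 0 : Fin (n+1) → ℝ) i * x +
           (Fin.snoc (fun i => (ti i - φ) / ω) 0 : Fin (n+1) → ℝ) i)
      = h ⟨x, hx⟩ := by
    rw [Fin.sum_univ_castSucc]
    simp only [Fin.snoc_castSucc, Fin.snoc_last, zero_mul, add_zero]
    rw [← hsum]
    simp only [ContinuousMap.coe_sum, ContinuousMap.coe_smul, Finset.sum_apply,
      Pi.smul_apply, smul_eq_mul]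
    apply Finset.sum_congr rfl
    intro i _
    rw [hg, hvec i]
    simp only [s, ContinuousMap.coe_mk]
    have harg : ω * (li i / ω * x + (ti i - φ) / ω) + φ = li i * x + ti i := by
      field_simp
      ring
    rw [harg]
    field_simp
  rw [hval]
  have : |f x - h ⟨x, hx⟩| = dist (F ⟨x, hx⟩) (h ⟨x, hx⟩) := by
    simp [F, Real.dist_eq, Set.restrict]
  rw [this]
  exact lt_of_le_of_lt (ContinuousMap.dist_apply_le_dist _) hdist
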